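/- Let T be an N×N upper triangular complex matrix (T i j = 0 for i > j) whose diagonal entries are pairwise distinct (T i i ≠ T j j for i ≠ j), and let F = exp T be its matrix exponential. Then F is upper triangular, F i i = exp(T i i) for every i, and for all indices i < j one has F i j = ( T i j · (F j j − F i i) + ∑_{k, i < k < j} (T i k · F k j − F i k · T k j) ) / (T j j − T i i). -/

import Mathlib

open Matrix Finset

attribute [local instance] Matrix.linftyOpNormedAddCommGroup Matrix.linftyOpNormedRing
  Matrix.linftyOpNormedAlgebra

private lemma tri_pow {N : ℕ} (T : Matrix (Fin N) (Fin N) ℂ)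
    (hupper : ∀ i j : Fin N, j < i → T i j = 0) (n : ℕ) :
    (∀ i j : Fin N, j < i → (T ^ n) i j = 0) ∧ (∀ i : Fin N, (T ^ n) i i = (T i i) ^ n) := by
  induction n with
  | zero =>
    refine ⟨fun i j h => ?_, fun i => by simp⟩
    simp only [pow_zero, Matrix.one_apply]
    exact if_neg (ne_of_gt h)
  | succ n ih =>
    obtain ⟨ih1, ih2⟩ := ih
    constructor
    · intro i j hji
      rw [pow_succ, Matrix.mul_apply]
      apply Finset.sum_eq_zero
      intro k _
      rcases lt_or_ge k i with hk | hk
      · rw [ih1 i k hk, zero_mul]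
      · rw [hupper k j (lt_of_lt_of_le hji hk), mul_zero]
    · intro i
      rw [pow_succ, Matrix.mul_apply, pow_succ]
      rw [Finset.sum_eq_single i]
      · rw [ih2 i]
      · intro k _ hk
        rcases lt_or_gt_of_ne hk with hk' | hk'
        · rw [ih1 i k hk', zero_mul]
        · rw [hupper k i hk', mul_zero]
      · intro h; exact absurd (Finset.mem_univ i) h

theorem parlett_recurrence_exp (N : ℕ) (T : Matrix (Fin N) (Fin N) ℂ)
    (hupper : ∀ i j : Fin N, j < i → T i j = 0)
    (hdiag : ∀ i j : Fin N, i ≠ j → T i i ≠ T j j)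
    (F : Matrix (Fin N) (Fin N) ℂ) (hF : F = NormedSpace.exp T) :
    (∀ i j : Fin N, j < i → F i j = 0) ∧
    (∀ i : Fin N, F i i = Complex.exp (T i i)) ∧
    (∀ i j : Fin N, i < j →
      F i j = (T i j * (F j j - F i i) +
        ∑ k ∈ Finset.Ioo i j, (T i k * F k j - F i k * T k j)) / (T j j - T i i)) := by
  -- entry evaluation commutes with the exponential series
  have key : ∀ i j : Fin N, F i j = ∑' n : ℕ, (n.factorial⁻¹ : ℂ) • (T ^ n) i j := by
    intro i j
    let f : Matrix (Fin N) (Fin N) ℂ →ₗ[ℂ] ℂ :=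
      { toFun := fun A => A i j, map_add' := fun _ _ => rfl, map_smul' := fun _ _ => rfl }
    let fc : Matrix (Fin N) (Fin N) ℂ →L[ℂ] ℂ := ⟨f, f.continuous_of_finiteDimensional⟩
    have hsum : Summable fun n : ℕ => (n.factorial⁻¹ : ℂ) • T ^ n :=
      NormedSpace.expSeries_summable' (𝕂 := ℂ) T
    have hFe : F i j = fc (NormedSpace.exp T) := by rw [hF]; rfl
    rw [hFe, NormedSpace.exp_eq_tsum ℂ, fc.map_tsum hsum]
    rfl
  have h1 : ∀ i j : Fin N, j < i → F i j = 0 := by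
    intro i j hji
    rw [key i j]
    have : (fun n : ℕ => (n.factorial⁻¹ : ℂ) • (T ^ n) i j) = fun _ => (0 : ℂ) :=
      funext fun n => by rw [(tri_pow T hupper n).1 i j hji, smul_zero]
    rw [this, tsum_zero]
  have h2 : ∀ i : Fin N, F i i = Complex.exp (T i i) := by
    intro i
    rw [key i i, Complex.exp_eq_exp_ℂ, NormedSpace.exp_eq_tsum ℂ]
    exact tsum_congr fun n => by rw [(tri_pow T hupper n).2 i]
  refine ⟨h1, h2, ?_⟩
  intro i j hij
  have hcomm : T * F = F * T := by
    rw [hF]; exact ((Commute.refl T).exp_right)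
  have hsum0 : ∑ k : Fin N, (T i k * F k j - F i k * T k j) = 0 := by
    have := congrArg (fun M => M i j) hcomm
    simp only [Matrix.mul_apply] at this
    rw [Finset.sum_sub_distrib, this, sub_self]
  -- restrict to Icc i j
  have hIcc : ∑ k ∈ Finset.Icc i j, (T i k * F k j - F i k * T k j) = 0 := by
    rw [← hsum0]
    apply Finset.sum_subset (Finset.subset_univ _)
    intro k _ hk
    rw [Finset.mem_Icc, not_and_or] at hk
    rcases hk with hk | hk
    · push_neg at hk
      rw [hupper i k hk, h1 i k hk, zero_mul, zero_mul, sub_zero]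
    · push_neg at hk
      rw [hupper k j hk, h1 k j hk, mul_zero, mul_zero, sub_zero]
  have hsplit : Finset.Icc i j = insert j (insert i (Finset.Ioo i j)) := by
    rw [Finset.Ioo_insert_left hij, Finset.Ico_insert_right (le_of_lt hij)]
  have hjni : j ∉ insert i (Finset.Ioo i j) := by
    simp [Finset.mem_Ioo, (ne_of_gt hij : j ≠ i)]
  have hini : i ∉ Finset.Ioo i j := by simp
  rw [hsplit, Finset.sum_insert hjni, Finset.sum_insert hini] at hIcc
  have hd : T j j - T i i ≠ 0 := sub_ne_zero.mpr (hdiag j i (ne_of_gt hij))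
  rw [eq_div_iff hd]
  linear_combination -hIcc
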